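/- The penalized estimator satisfies β_R = A_R·P_{S,R}·β_ll + (I − A_R)·β_ll, and equivalently β_R = P_{S,R}·β_ll + (I − A_R)·(I − P_{S,R})·β_ll (equations (8) and (11): the penalized estimator is a pointwise compromise between an additive fit and the local linear fit, Proposition 1). -/
import Mathlib


open Matrix

/-- Proposition 1, equations (8) and (11): the penalized estimator
`β_R = (S + R·(I − P_add))⁻¹·S·β_ll` satisfies
`β_R = A_R·P_{S,R}·β_ll + (I − A_R)·β_ll` and
`β_R = P_{S,R}·β_ll + (I − A_R)·(I − P_{S,R})·β_ll`. -/
theorem penalized_estimator_compromise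
    {N q : ℕ} (hN : 0 < N) (hq : 0 < q)
    (S : Matrix (Fin N) (Fin N) ℝ) (hS : S.PosSemidef)
    (R : ℝ) (hR : 0 < R)
    (Z : Matrix (Fin q) (Fin N) ℝ)
    (hZ1 : (Zᵀ * Z) * (Zᵀ * Z) = Zᵀ * Z)
    (hZ2 : (Z * Zᵀ) * (Z * Zᵀ) = Z * Zᵀ)
    (hSR : (S + R • (1 : Matrix (Fin N) (Fin N) ℝ)).PosDef)
    (A : Matrix (Fin N) (Fin N) ℝ)
    (hA : A = R • (S + R • (1 : Matrix (Fin N) (Fin N) ℝ))⁻¹)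
    (Λ : Matrix (Fin q) (Fin q) ℝ)
    (hΛ : Λ = (1 : Matrix (Fin q) (Fin q) ℝ) - Z * A * Zᵀ)
    (hpen : (S + R • ((1 : Matrix (Fin N) (Fin N) ℝ) - Zᵀ * Z)).PosDef)
    (P : Matrix (Fin N) (Fin N) ℝ)
    (hP : P = Zᵀ * Λ⁻¹ * Z * ((1 : Matrix (Fin N) (Fin N) ℝ) - A))
    (βll : Fin N → ℝ) (βR : Fin N → ℝ)
    (hβR : βR = ((S + R • ((1 : Matrix (Fin N) (Fin N) ℝ) - Zᵀ * Z))⁻¹ * S).mulVec βll) :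
    βR = (A * P).mulVec βll + ((1 : Matrix (Fin N) (Fin N) ℝ) - A).mulVec βll ∧
      βR = P.mulVec βll +
        (((1 : Matrix (Fin N) (Fin N) ℝ) - A) *
          ((1 : Matrix (Fin N) (Fin N) ℝ) - P)).mulVec βll := by
  set M : Matrix (Fin N) (Fin N) ℝ := S + R • 1 with hMdef
  set B : Matrix (Fin N) (Fin N) ℝ := S + R • ((1 : Matrix (Fin N) (Fin N) ℝ) - Zᵀ * Z)
    with hBdef
  have hMdet : IsUnit M.det := isUnit_iff_ne_zero.mpr hSR.det_pos.ne'
  have hBdet : IsUnit B.det := isUnit_iff_ne_zero.mpr hpen.det_pos.ne'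
  have hM1 : M * M⁻¹ = 1 := M.mul_nonsing_inv hMdet
  have hM2 : M⁻¹ * M = 1 := M.nonsing_inv_mul hMdet
  have hB1 : B * B⁻¹ = 1 := B.mul_nonsing_inv hBdet
  have hB2 : B⁻¹ * B = 1 := B.nonsing_inv_mul hBdet
  have hMB : R • (Zᵀ * Z) = M - B := by
    rw [hMdef, hBdef, smul_sub]; abel
  have hMA : M * A = R • 1 := by
    rw [hA, Matrix.mul_smul, hM1]
  have hAM : A * M = R • 1 := by
    rw [hA, Matrix.smul_mul, hM2]
  have hMS : M - R • (1 : Matrix (Fin N) (Fin N) ℝ) = S := by rw [hMdef]; abel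
  have hM1A : M * (1 - A) = S := by
    rw [Matrix.mul_sub, mul_one, hMA, hMS]
  have h1A : (1 : Matrix (Fin N) (Fin N) ℝ) - A = M⁻¹ * S := by
    calc (1 : Matrix (Fin N) (Fin N) ℝ) - A = (M⁻¹ * M) * (1 - A) := by rw [hM2, one_mul]
    _ = M⁻¹ * (M * (1 - A)) := by rw [Matrix.mul_assoc]
    _ = M⁻¹ * S := by rw [hM1A]
  -- Λ is invertible with explicit inverse W
  set W : Matrix (Fin q) (Fin q) ℝ := 1 + R • (Z * B⁻¹ * Zᵀ) with hWdef
  have hT : Z * A * Zᵀ * (R • (Z * B⁻¹ * Zᵀ)) = R • (Z * B⁻¹ * Zᵀ) - Z * A * Zᵀ := by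
    calc Z * A * Zᵀ * (R • (Z * B⁻¹ * Zᵀ))
        = Z * A * ((R • (Zᵀ * Z)) * (B⁻¹ * Zᵀ)) := by
          simp only [Matrix.smul_mul, Matrix.mul_smul, Matrix.mul_assoc]
      _ = Z * A * ((M - B) * (B⁻¹ * Zᵀ)) := by rw [hMB]
      _ = Z * ((A * M) * (B⁻¹ * Zᵀ)) - Z * (A * ((B * B⁻¹) * Zᵀ)) := by
          simp only [Matrix.sub_mul, Matrix.mul_sub, Matrix.mul_assoc]
      _ = R • (Z * B⁻¹ * Zᵀ) - Z * A * Zᵀ := by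
          rw [hAM, hB1, Matrix.one_mul, Matrix.smul_mul, Matrix.one_mul]
          simp only [Matrix.mul_smul, Matrix.mul_assoc]
  have hΛW : Λ * W = 1 := by
    rw [hΛ, hWdef, Matrix.sub_mul, Matrix.mul_add, Matrix.mul_add, Matrix.one_mul,
      Matrix.one_mul, mul_one, hT]
    abel
  have hΛdet : IsUnit Λ.det := Matrix.isUnit_det_of_right_inverse hΛW
  have hΛ1 : Λ * Λ⁻¹ = 1 := Λ.mul_nonsing_inv hΛdet
  -- the key identity: B * (A * P + (1 - A)) = S
  have hZAZ : Z * A * Zᵀ = 1 - Λ := by rw [hΛ]; abel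
  have hBeq : B = M - R • (Zᵀ * Z) := by rw [hMB]; abel
  have hBAP : B * (A * P) = R • (Zᵀ * Z * (1 - A)) := by
    calc B * (A * P) = (M - R • (Zᵀ * Z)) * (A * P) := by rw [← hBeq]
      _ = M * A * P - R • (Zᵀ * (Z * A * P)) := by
          simp only [Matrix.sub_mul, Matrix.smul_mul, Matrix.mul_assoc]
      _ = R • P - R • (Zᵀ * ((Z * A * Zᵀ) * (Λ⁻¹ * Z * (1 - A)))) := by
          rw [hMA, Matrix.smul_mul, Matrix.one_mul, hP]
          simp only [Matrix.mul_assoc]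
      _ = R • P - R • (Zᵀ * ((1 - Λ) * (Λ⁻¹ * Z * (1 - A)))) := by rw [hZAZ]
      _ = R • P - R • (Zᵀ * (Λ⁻¹ * Z * (1 - A))) + R • (Zᵀ * ((Λ * Λ⁻¹) * Z * (1 - A))) := by
          simp only [Matrix.sub_mul, Matrix.mul_sub, smul_sub, Matrix.mul_assoc,
            Matrix.one_mul, Matrix.mul_one]
          abel
      _ = R • (Zᵀ * Z * (1 - A)) := by
          rw [hΛ1, Matrix.one_mul, hP]
          simp only [Matrix.mul_assoc, smul_sub]
          abel
  have hB1A : B * (1 - A) = S - R • (Zᵀ * Z * (1 - A)) := by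
    calc B * (1 - A) = (M - R • (Zᵀ * Z)) * (1 - A) := by rw [← hBeq]
      _ = M * (1 - A) - R • (Zᵀ * Z * (1 - A)) := by
          simp only [Matrix.sub_mul, Matrix.smul_mul]
      _ = S - R • (Zᵀ * Z * (1 - A)) := by rw [hM1A]
  have hkey : B * (A * P + (1 - A)) = S := by
    rw [Matrix.mul_add, hBAP, hB1A]; abel
  have hBS : B⁻¹ * S = A * P + (1 - A) := by
    calc B⁻¹ * S = B⁻¹ * (B * (A * P + (1 - A))) := by rw [hkey]
      _ = (B⁻¹ * B) * (A * P + (1 - A)) := by rw [Matrix.mul_assoc]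
      _ = A * P + (1 - A) := by rw [hB2, Matrix.one_mul]
  have hβR' : βR = (A * P + (1 - A)).mulVec βll := by rw [hβR, hBS]
  constructor
  · rw [hβR', Matrix.add_mulVec]
  · have halt : A * P + ((1 : Matrix (Fin N) (Fin N) ℝ) - A) =
        P + (1 - A) * (1 - P) := by noncomm_ring
    rw [hβR', halt, Matrix.add_mulVec]
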